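/- For 1 ≤ d ≤ 3 and for all u, v, with u, v > 0, one has the identity ∫_{ℝ^d} [K^{BTBM}_u(x) - K^{BTBM}_v(x)]² dx = K^{(2)}_{u,u}(0) + K^{(2)}_{v,v}(0) - 2 K^{(2)}_{u,v}(0), where K^{(2)}_{u,v}(0) = 4 ∫_0^∞ ∫_0^∞ (2π(r₁+r₂))^{-d/2} (2πu)^{-1/2} e^{-r₁²/(2u)} (2πv)^{-1/2} e^{-r₂²/(2v)} dr₁ dr₂. -/

import Mathlib

open MeasureTheory Real

set_option maxHeartbeats 1000000

/-- The standard `d`-dimensional Gaussian heat kernel with variance parameter `s`. -/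
noncomputable def heatK (d : ℕ) (s : ℝ) (x : EuclideanSpace ℝ (Fin d)) : ℝ :=
  (2 * π * s) ^ (-(d : ℝ) / 2) * Real.exp (-‖x‖ ^ 2 / (2 * s))

/-- The Brownian-time Brownian motion density in dimension `d`. -/
noncomputable def btbmK (d : ℕ) (t : ℝ) (x : EuclideanSpace ℝ (Fin d)) : ℝ :=
  2 * ∫ s in Set.Ioi (0 : ℝ),
    heatK d s x * ((2 * π * t) ^ (-(1 : ℝ) / 2) * Real.exp (-s ^ 2 / (2 * t)))

/-- The diagonal value at `0` of the `2`-Brownian-times Brownian motion density. -/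
noncomputable def twoBtK (d : ℕ) (u v : ℝ) : ℝ :=
  4 * ∫ r₁ in Set.Ioi (0 : ℝ), ∫ r₂ in Set.Ioi (0 : ℝ),
    (2 * π * (r₁ + r₂)) ^ (-(d : ℝ) / 2) *
      ((2 * π * u) ^ (-(1 : ℝ) / 2) * Real.exp (-r₁ ^ 2 / (2 * u))) *
      ((2 * π * v) ^ (-(1 : ℝ) / 2) * Real.exp (-r₂ ^ 2 / (2 * v)))

namespace BTBMaux

open scoped ENNReal

variable {V : Type*} [NormedAddCommGroup V] [InnerProductSpace ℝ V] [FiniteDimensional ℝ V]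
  [MeasurableSpace V] [BorelSpace V]

lemma integrable_rexp_neg_mul_sq_norm {b : ℝ} (hb : 0 < b) :
    Integrable (fun v : V => rexp (-b * ‖v‖ ^ 2)) := by
  have h := (GaussianFourier.integrable_cexp_neg_mul_sq_norm_add (V := V)
    (show 0 < (b : ℂ).re by simpa using hb) 0 0).norm
  refine h.congr (Filter.Eventually.of_forall fun v => ?_)
  simp only [Complex.norm_exp]
  norm_num
  left
  norm_cast

lemma heatK_mul_eq {d : ℕ} {r₁ r₂ : ℝ} (h1 : 0 < r₁) (h2 : 0 < r₂)
    (x : EuclideanSpace ℝ (Fin d)) :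
    heatK d r₁ x * heatK d r₂ x
      = ((2 * π * r₁) ^ (-(d : ℝ) / 2) * (2 * π * r₂) ^ (-(d : ℝ) / 2))
        * rexp (-((r₁ + r₂) / (2 * r₁ * r₂)) * ‖x‖ ^ 2) := by
  unfold heatK
  rw [mul_mul_mul_comm, ← Real.exp_add]
  congr 1
  field_simp
  ring

lemma integrable_heatK_mul {d : ℕ} {r₁ r₂ : ℝ} (h1 : 0 < r₁) (h2 : 0 < r₂) :
    Integrable (fun x : EuclideanSpace ℝ (Fin d) => heatK d r₁ x * heatK d r₂ x) := by
  have hb : 0 < (r₁ + r₂) / (2 * r₁ * r₂) := by positivity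
  have := (integrable_rexp_neg_mul_sq_norm (V := EuclideanSpace ℝ (Fin d)) hb).const_mul
    ((2 * π * r₁) ^ (-(d : ℝ) / 2) * (2 * π * r₂) ^ (-(d : ℝ) / 2))
  exact this.congr (Filter.Eventually.of_forall fun x => (heatK_mul_eq h1 h2 x).symm)

lemma integral_heatK_mul {d : ℕ} {r₁ r₂ : ℝ} (h1 : 0 < r₁) (h2 : 0 < r₂) :
    ∫ x : EuclideanSpace ℝ (Fin d), heatK d r₁ x * heatK d r₂ x
      = (2 * π * (r₁ + r₂)) ^ (-(d : ℝ) / 2) := by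
  have hb : 0 < (r₁ + r₂) / (2 * r₁ * r₂) := by positivity
  simp_rw [heatK_mul_eq h1 h2]
  rw [integral_const_mul, GaussianFourier.integral_rexp_neg_mul_sq_norm hb, finrank_euclideanSpace_fin]
  have hπ : (0:ℝ) < π := Real.pi_pos
  have e1 : (2 * π * r₁ : ℝ) ^ (-(d : ℝ) / 2) = ((2 * π * r₁)⁻¹) ^ ((d : ℝ) / 2) := by
    rw [neg_div, Real.rpow_neg (by positivity), ← Real.inv_rpow (by positivity)]
  have e2 : (2 * π * r₂ : ℝ) ^ (-(d : ℝ) / 2) = ((2 * π * r₂)⁻¹) ^ ((d : ℝ) / 2) := by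
    rw [neg_div, Real.rpow_neg (by positivity), ← Real.inv_rpow (by positivity)]
  have e3 : (2 * π * (r₁ + r₂) : ℝ) ^ (-(d : ℝ) / 2) = ((2 * π * (r₁ + r₂))⁻¹) ^ ((d : ℝ) / 2) := by
    rw [neg_div, Real.rpow_neg (by positivity), ← Real.inv_rpow (by positivity)]
  rw [e1, e2, e3, ← Real.mul_rpow (by positivity) (by positivity),
    ← Real.mul_rpow (by positivity) (by positivity)]
  congr 1
  field_simp

lemma heatK_pos {d : ℕ} {s : ℝ} (hs : 0 < s) (x : EuclideanSpace ℝ (Fin d)) :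
    0 < heatK d s x := by
  have h2 : 0 < 2 * π * s := by positivity
  exact mul_pos (Real.rpow_pos_of_pos h2 _) (Real.exp_pos _)

lemma lintegral_heatK_mul {d : ℕ} {r₁ r₂ : ℝ} (h1 : 0 < r₁) (h2 : 0 < r₂) :
    ∫⁻ x : EuclideanSpace ℝ (Fin d),
        ENNReal.ofReal (heatK d r₁ x) * ENNReal.ofReal (heatK d r₂ x)
      = ENNReal.ofReal ((2 * π * (r₁ + r₂)) ^ (-(d : ℝ) / 2)) := by
  have : ∀ x : EuclideanSpace ℝ (Fin d),
      ENNReal.ofReal (heatK d r₁ x) * ENNReal.ofReal (heatK d r₂ x)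
        = ENNReal.ofReal (heatK d r₁ x * heatK d r₂ x) := fun x =>
    (ENNReal.ofReal_mul (heatK_pos h1 x).le).symm
  simp_rw [this]
  rw [← ofReal_integral_eq_lintegral_ofReal (integrable_heatK_mul h1 h2)
    (Filter.Eventually.of_forall fun x => (mul_pos (heatK_pos h1 x) (heatK_pos h2 x)).le),
    integral_heatK_mul h1 h2]

noncomputable def gk (t r : ℝ) : ℝ := (2 * π * t) ^ (-(1 : ℝ) / 2) * Real.exp (-r ^ 2 / (2 * t))

noncomputable def LL (d : ℕ) (t : ℝ) (x : EuclideanSpace ℝ (Fin d)) : ℝ≥0∞ :=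
  ∫⁻ r in Set.Ioi (0 : ℝ), ENNReal.ofReal (heatK d r x * gk t r)

lemma gk_pos {t r : ℝ} (ht : 0 < t) : 0 < gk t r := by
  have h2 : 0 < 2 * π * t := by positivity
  exact mul_pos (Real.rpow_pos_of_pos h2 _) (Real.exp_pos _)

lemma measurable_gk (t : ℝ) : Measurable (gk t) := by unfold gk; fun_prop

lemma measurable_heatK_prod (d : ℕ) :
    Measurable (fun p : EuclideanSpace ℝ (Fin d) × ℝ => heatK d p.2 p.1) := by
  unfold heatK; fun_prop

lemma measurable_heatK_right (d : ℕ) (r : ℝ) :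
    Measurable (fun x : EuclideanSpace ℝ (Fin d) => heatK d r x) :=
  (measurable_heatK_prod d).comp (measurable_id.prodMk measurable_const)

lemma measurable_heatK_left {d : ℕ} (x : EuclideanSpace ℝ (Fin d)) :
    Measurable (fun r : ℝ => heatK d r x) :=
  (measurable_heatK_prod d).comp (measurable_const.prodMk measurable_id)

lemma btbmK_eq_toReal {d : ℕ} {t : ℝ} (ht : 0 < t) (x : EuclideanSpace ℝ (Fin d)) :
    btbmK d t x = 2 * (LL d t x).toReal := by
  have hnn : 0 ≤ᵐ[volume.restrict (Set.Ioi (0:ℝ))] fun r => heatK d r x * gk t r :=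
    (ae_restrict_iff' measurableSet_Ioi).2 (Filter.Eventually.of_forall fun r hr =>
      (mul_pos (heatK_pos hr x) (gk_pos ht)).le)
  have hm : AEStronglyMeasurable (fun r => heatK d r x * gk t r)
      (volume.restrict (Set.Ioi (0:ℝ))) :=
    ((measurable_heatK_left x).mul (measurable_gk t)).aestronglyMeasurable
  have := integral_eq_lintegral_of_nonneg_ae hnn hm
  unfold btbmK LL gk
  rw [show (∫ s in Set.Ioi (0:ℝ), heatK d s x *
      ((2 * π * t) ^ (-(1:ℝ)/2) * Real.exp (-s ^ 2 / (2 * t))))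
    = ∫ r in Set.Ioi (0:ℝ), heatK d r x * gk t r from rfl, this]
  rfl

lemma measurable_LL (d : ℕ) (t : ℝ) : Measurable (LL d t) := by
  have hm : Measurable (fun p : EuclideanSpace ℝ (Fin d) × ℝ =>
      ENNReal.ofReal (heatK d p.2 p.1 * gk t p.2)) :=
    ENNReal.measurable_ofReal.comp ((measurable_heatK_prod d).mul
      ((measurable_gk t).comp measurable_snd))
  exact hm.lintegral_prod_right'


noncomputable def Psi (d : ℕ) (t : ℝ) (p : EuclideanSpace ℝ (Fin d) × ℝ) : ℝ≥0∞ :=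
  ENNReal.ofReal (heatK d p.2 p.1 * gk t p.2)

lemma measurable_Psi (d : ℕ) (t : ℝ) : Measurable (Psi d t) :=
  ENNReal.measurable_ofReal.comp ((measurable_heatK_prod d).mul
    ((measurable_gk t).comp measurable_snd))

lemma LL_eq (d : ℕ) (t : ℝ) (x : EuclideanSpace ℝ (Fin d)) :
    LL d t x = ∫⁻ r in Set.Ioi (0 : ℝ), Psi d t (x, r) := rfl

lemma lintegral_LL_mul {d : ℕ} {u v : ℝ} (hu : 0 < u) (hv : 0 < v) :
    ∫⁻ x : EuclideanSpace ℝ (Fin d), LL d u x * LL d v x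
      = ∫⁻ r₁ in Set.Ioi (0 : ℝ), ∫⁻ r₂ in Set.Ioi (0 : ℝ),
          ENNReal.ofReal ((2 * π * (r₁ + r₂)) ^ (-(d : ℝ) / 2) * gk u r₁ * gk v r₂) := by
  have hΨmx : ∀ t (x : EuclideanSpace ℝ (Fin d)), Measurable (fun r : ℝ => Psi d t (x, r)) :=
    fun t x => (measurable_Psi d t).comp (measurable_const.prodMk measurable_id)
  -- step 1
  have step1 : ∀ x : EuclideanSpace ℝ (Fin d), LL d u x * LL d v x
      = ∫⁻ r₁ in Set.Ioi (0:ℝ), ∫⁻ r₂ in Set.Ioi (0:ℝ), Psi d u (x, r₁) * Psi d v (x, r₂) := by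
    intro x
    rw [LL_eq, LL_eq, ← lintegral_mul_const'' _ (hΨmx u x).aemeasurable]
    exact lintegral_congr fun r₁ => (lintegral_const_mul'' _ (hΨmx v x).aemeasurable).symm
  simp_rw [step1]
  -- step 2: swap x and r₁
  have hswap1 : Measurable (fun z : EuclideanSpace ℝ (Fin d) × ℝ =>
      ∫⁻ r₂ in Set.Ioi (0:ℝ), Psi d u z * Psi d v (z.1, r₂)) := by
    apply Measurable.lintegral_prod_right'
      (f := fun z : (EuclideanSpace ℝ (Fin d) × ℝ) × ℝ => Psi d u z.1 * Psi d v (z.1.1, z.2))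
    exact ((measurable_Psi d u).comp measurable_fst).mul
      ((measurable_Psi d v).comp ((measurable_fst.comp measurable_fst).prodMk measurable_snd))
  rw [lintegral_lintegral_swap hswap1.aemeasurable]
  refine setLIntegral_congr_fun measurableSet_Ioi (fun r₁ hr₁ => ?_)
  -- swap x and r₂
  have hswap2 : Measurable (fun z : EuclideanSpace ℝ (Fin d) × ℝ =>
      Psi d u (z.1, r₁) * Psi d v z) :=
    ((measurable_Psi d u).comp (measurable_fst.prodMk measurable_const)).mul (measurable_Psi d v)
  rw [lintegral_lintegral_swap hswap2.aemeasurable]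
  refine setLIntegral_congr_fun measurableSet_Ioi (fun r₂ hr₂ => ?_)
  -- step 3: the inner x-integral
  have key : ∀ x : EuclideanSpace ℝ (Fin d), Psi d u (x, r₁) * Psi d v (x, r₂)
      = (ENNReal.ofReal (heatK d r₁ x) * ENNReal.ofReal (heatK d r₂ x))
        * (ENNReal.ofReal (gk u r₁) * ENNReal.ofReal (gk v r₂)) := by
    intro x
    unfold Psi
    rw [ENNReal.ofReal_mul (heatK_pos hr₁ x).le, ENNReal.ofReal_mul (heatK_pos hr₂ x).le]
    ring
  simp_rw [key]
  have hmul_meas : Measurable (fun x : EuclideanSpace ℝ (Fin d) =>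
      ENNReal.ofReal (heatK d r₁ x) * ENNReal.ofReal (heatK d r₂ x)) :=
    (ENNReal.measurable_ofReal.comp (measurable_heatK_right d r₁)).mul
      (ENNReal.measurable_ofReal.comp (measurable_heatK_right d r₂))
  rw [lintegral_mul_const _ hmul_meas, lintegral_heatK_mul hr₁ hr₂,
    ← ENNReal.ofReal_mul (gk_pos hu).le,
    ← ENNReal.ofReal_mul (Real.rpow_nonneg (by have h1 := Set.mem_Ioi.mp hr₁; have h2 := Set.mem_Ioi.mp hr₂; positivity) _), mul_assoc]
  ring_nf

lemma measurable_phi (d : ℕ) (u v : ℝ) :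
    Measurable (fun p : ℝ × ℝ =>
      ENNReal.ofReal ((2 * π * (p.1 + p.2)) ^ (-(d : ℝ) / 2) * gk u p.1 * gk v p.2)) := by
  unfold gk; fun_prop

lemma A_lt_top {d : ℕ} (hd3 : d ≤ 3) {t : ℝ} (ht : 0 < t) :
    ∫⁻ r in Set.Ioi (0 : ℝ), ENNReal.ofReal (r ^ (-(d : ℝ) / 4) * gk t r) < ⊤ := by
  have hp : (-1 : ℝ) < -(d : ℝ) / 4 := by
    have : (d : ℝ) ≤ 3 := by exact_mod_cast hd3
    linarith
  have hb : (0 : ℝ) < 1 / (2 * t) := by positivity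
  have hint : IntegrableOn (fun r : ℝ => r ^ (-(d : ℝ) / 4) * Real.exp (-(1 / (2 * t)) * r ^ 2))
      (Set.Ioi 0) := integrableOn_rpow_mul_exp_neg_mul_sq hb hp
  have hint2 : IntegrableOn (fun r : ℝ => r ^ (-(d : ℝ) / 4) * gk t r) (Set.Ioi 0) := by
    apply IntegrableOn.congr_fun (hint.const_mul ((2 * π * t) ^ (-(1 : ℝ) / 2))) ?_
      measurableSet_Ioi
    intro r _
    unfold gk
    simp only []
    rw [show -(1 / (2 * t)) * r ^ 2 = -r ^ 2 / (2 * t) by ring]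
    ring
  exact hint2.lintegral_lt_top

lemma T_lt_top {d : ℕ} (hd3 : d ≤ 3) {u v : ℝ} (hu : 0 < u) (hv : 0 < v) :
    (∫⁻ r₁ in Set.Ioi (0 : ℝ), ∫⁻ r₂ in Set.Ioi (0 : ℝ),
        ENNReal.ofReal ((2 * π * (r₁ + r₂)) ^ (-(d : ℝ) / 2) * gk u r₁ * gk v r₂)) < ⊤ := by
  set c : ℝ≥0∞ := ENNReal.ofReal ((2 * π) ^ (-(d : ℝ) / 2)) with hc
  set f : ℝ → ℝ≥0∞ := fun r => ENNReal.ofReal (r ^ (-(d : ℝ) / 4) * gk u r) with hf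
  set g : ℝ → ℝ≥0∞ := fun r => ENNReal.ofReal (r ^ (-(d : ℝ) / 4) * gk v r) with hg
  have hfm : Measurable f := by unfold f gk; fun_prop
  have hgm : Measurable g := by unfold g gk; fun_prop
  -- pointwise bound on (Ioi 0) × (Ioi 0)
  have hbound : ∀ r₁ ∈ Set.Ioi (0:ℝ), ∀ r₂ ∈ Set.Ioi (0:ℝ),
      ENNReal.ofReal ((2 * π * (r₁ + r₂)) ^ (-(d : ℝ) / 2) * gk u r₁ * gk v r₂)
        ≤ c * f r₁ * g r₂ := by
    intro r₁ hr₁ r₂ hr₂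
    rw [Set.mem_Ioi] at hr₁ hr₂
    have key : (2 * π * (r₁ + r₂)) ^ (-(d : ℝ) / 2)
        ≤ (2 * π) ^ (-(d : ℝ) / 2) * (r₁ ^ (-(d : ℝ) / 4) * r₂ ^ (-(d : ℝ) / 4)) := by
      have h1 : (2 * π * (r₁ + r₂)) ^ (-(d : ℝ) / 2)
          = (2 * π) ^ (-(d : ℝ) / 2) * (r₁ + r₂) ^ (-(d : ℝ) / 2) := by
        rw [Real.mul_rpow (by positivity) (by positivity)]
      rw [h1]
      have h2 : (r₁ + r₂) ^ (-(d : ℝ) / 2) ≤ (Real.sqrt (r₁ * r₂)) ^ (-(d : ℝ) / 2) := by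
        apply Real.rpow_le_rpow_of_nonpos (Real.sqrt_pos.2 (by positivity))
        · rw [show r₁ + r₂ = Real.sqrt ((r₁ + r₂) ^ 2) by
            rw [Real.sqrt_sq (by positivity)]]
          apply Real.sqrt_le_sqrt
          nlinarith
        · rw [neg_div]
          exact neg_nonpos.2 (by positivity)
      have h3 : (Real.sqrt (r₁ * r₂)) ^ (-(d : ℝ) / 2)
          = r₁ ^ (-(d : ℝ) / 4) * r₂ ^ (-(d : ℝ) / 4) := by
        rw [Real.sqrt_eq_rpow, ← Real.rpow_mul (by positivity),
          show (1:ℝ) / 2 * (-(d : ℝ) / 2) = -(d : ℝ) / 4 by ring,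
          Real.mul_rpow hr₁.le hr₂.le]
      calc (2 * π) ^ (-(d : ℝ) / 2) * (r₁ + r₂) ^ (-(d : ℝ) / 2)
          ≤ (2 * π) ^ (-(d : ℝ) / 2) * (Real.sqrt (r₁ * r₂)) ^ (-(d : ℝ) / 2) := by
            apply mul_le_mul_of_nonneg_left h2 (by positivity)
        _ = (2 * π) ^ (-(d : ℝ) / 2) * (r₁ ^ (-(d : ℝ) / 4) * r₂ ^ (-(d : ℝ) / 4)) := by rw [h3]
    rw [hc, hf, hg]
    rw [← ENNReal.ofReal_mul (Real.rpow_nonneg (by positivity) _),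
      ← ENNReal.ofReal_mul (mul_nonneg (Real.rpow_nonneg (by positivity) _)
        (mul_nonneg (Real.rpow_nonneg hr₁.le _) (gk_pos hu).le))]
    apply ENNReal.ofReal_le_ofReal
    have hgu : 0 < gk u r₁ := gk_pos hu
    have hgv : 0 < gk v r₂ := gk_pos hv
    calc (2 * π * (r₁ + r₂)) ^ (-(d : ℝ) / 2) * gk u r₁ * gk v r₂
        ≤ ((2 * π) ^ (-(d : ℝ) / 2) * (r₁ ^ (-(d : ℝ) / 4) * r₂ ^ (-(d : ℝ) / 4)))
            * gk u r₁ * gk v r₂ := by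
          apply mul_le_mul_of_nonneg_right (mul_le_mul_of_nonneg_right key hgu.le) hgv.le
      _ = (2 * π) ^ (-(d : ℝ) / 2) * (r₁ ^ (-(d : ℝ) / 4) * gk u r₁)
            * (r₂ ^ (-(d : ℝ) / 4) * gk v r₂) := by ring
  -- bound the double lintegral
  have hAu := A_lt_top hd3 hu
  have hAv := A_lt_top hd3 hv
  have hstep : (∫⁻ r₁ in Set.Ioi (0 : ℝ), ∫⁻ r₂ in Set.Ioi (0 : ℝ),
      ENNReal.ofReal ((2 * π * (r₁ + r₂)) ^ (-(d : ℝ) / 2) * gk u r₁ * gk v r₂))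
      ≤ ∫⁻ r₁ in Set.Ioi (0 : ℝ), ∫⁻ r₂ in Set.Ioi (0 : ℝ), c * f r₁ * g r₂ := by
    refine lintegral_mono_ae ((ae_restrict_iff' measurableSet_Ioi).2
      (Filter.Eventually.of_forall fun r₁ hr₁ => ?_))
    refine lintegral_mono_ae ((ae_restrict_iff' measurableSet_Ioi).2
      (Filter.Eventually.of_forall fun r₂ hr₂ => ?_))
    exact hbound r₁ hr₁ r₂ hr₂
  refine lt_of_le_of_lt hstep ?_
  have hinner : ∀ r₁ : ℝ, (∫⁻ r₂ in Set.Ioi (0 : ℝ), c * f r₁ * g r₂)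
      = c * f r₁ * ∫⁻ r₂ in Set.Ioi (0 : ℝ), g r₂ :=
    fun r₁ => lintegral_const_mul'' _ hgm.aemeasurable
  simp_rw [hinner]
  rw [lintegral_mul_const'' _ ((hfm.const_mul c).aemeasurable),
    lintegral_const_mul'' _ hfm.aemeasurable]
  have hc_lt : c < ⊤ := ENNReal.ofReal_lt_top
  exact ENNReal.mul_lt_top (ENNReal.mul_lt_top hc_lt hAu) hAv

lemma twoBtK_eq_toReal {d : ℕ} (hd3 : d ≤ 3) {u v : ℝ} (hu : 0 < u) (hv : 0 < v) :
    twoBtK d u v = 4 * (∫⁻ r₁ in Set.Ioi (0 : ℝ), ∫⁻ r₂ in Set.Ioi (0 : ℝ),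
        ENNReal.ofReal ((2 * π * (r₁ + r₂)) ^ (-(d : ℝ) / 2) * gk u r₁ * gk v r₂)).toReal := by
  have hm := measurable_phi d u v
  have hinner_meas : Measurable (fun r₁ : ℝ => ∫⁻ r₂ in Set.Ioi (0 : ℝ),
      ENNReal.ofReal ((2 * π * (r₁ + r₂)) ^ (-(d : ℝ) / 2) * gk u r₁ * gk v r₂)) :=
    hm.lintegral_prod_right'
  have hfin : ∀ᵐ r₁ ∂(volume.restrict (Set.Ioi (0:ℝ))), (∫⁻ r₂ in Set.Ioi (0 : ℝ),
      ENNReal.ofReal ((2 * π * (r₁ + r₂)) ^ (-(d : ℝ) / 2) * gk u r₁ * gk v r₂)) < ⊤ := by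
    exact ae_lt_top hinner_meas (T_lt_top hd3 hu hv).ne
  have inner_eq : ∀ r₁ ∈ Set.Ioi (0:ℝ),
      (∫ r₂ in Set.Ioi (0:ℝ), (2 * π * (r₁ + r₂)) ^ (-(d : ℝ) / 2) * gk u r₁ * gk v r₂)
        = (∫⁻ r₂ in Set.Ioi (0 : ℝ),
            ENNReal.ofReal ((2 * π * (r₁ + r₂)) ^ (-(d : ℝ) / 2) * gk u r₁ * gk v r₂)).toReal := by
    intro r₁ hr₁
    rw [Set.mem_Ioi] at hr₁
    apply integral_eq_lintegral_of_nonneg_ae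
    · refine (ae_restrict_iff' measurableSet_Ioi).2 (Filter.Eventually.of_forall fun r₂ hr₂ => ?_)
      rw [Set.mem_Ioi] at hr₂
      have := gk_pos hu (r := r₁)
      have := gk_pos hv (r := r₂)
      have : (0:ℝ) ≤ (2 * π * (r₁ + r₂)) ^ (-(d : ℝ) / 2) := Real.rpow_nonneg (by positivity) _
      positivity
    · apply Measurable.aestronglyMeasurable
      unfold gk; fun_prop
  have houter : (∫ r₁ in Set.Ioi (0:ℝ), ∫ r₂ in Set.Ioi (0:ℝ),
      (2 * π * (r₁ + r₂)) ^ (-(d : ℝ) / 2) * gk u r₁ * gk v r₂)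
      = (∫⁻ r₁ in Set.Ioi (0 : ℝ), ∫⁻ r₂ in Set.Ioi (0 : ℝ),
          ENNReal.ofReal ((2 * π * (r₁ + r₂)) ^ (-(d : ℝ) / 2) * gk u r₁ * gk v r₂)).toReal := by
    rw [← integral_toReal hinner_meas.aemeasurable hfin]
    exact integral_congr_ae ((ae_restrict_iff' measurableSet_Ioi).2
      (Filter.Eventually.of_forall inner_eq))
  calc twoBtK d u v
      = 4 * ∫ r₁ in Set.Ioi (0:ℝ), ∫ r₂ in Set.Ioi (0:ℝ),
          (2 * π * (r₁ + r₂)) ^ (-(d : ℝ) / 2) * gk u r₁ * gk v r₂ := rfl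
    _ = _ := by rw [houter]

lemma cross {d : ℕ} (hd3 : d ≤ 3) {u v : ℝ} (hu : 0 < u) (hv : 0 < v) :
    Integrable (fun x : EuclideanSpace ℝ (Fin d) => btbmK d u x * btbmK d v x) ∧
      ∫ x : EuclideanSpace ℝ (Fin d), btbmK d u x * btbmK d v x = twoBtK d u v := by
  have heq : ∀ x : EuclideanSpace ℝ (Fin d),
      btbmK d u x * btbmK d v x = 4 * (LL d u x * LL d v x).toReal := by
    intro x
    rw [btbmK_eq_toReal hu, btbmK_eq_toReal hv, ENNReal.toReal_mul]
    ring
  have hmeas : Measurable (fun x : EuclideanSpace ℝ (Fin d) => LL d u x * LL d v x) :=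
    (measurable_LL d u).mul (measurable_LL d v)
  have hS := lintegral_LL_mul (d := d) hu hv
  have hT := T_lt_top (d := d) hd3 hu hv
  have hne : (∫⁻ x : EuclideanSpace ℝ (Fin d), LL d u x * LL d v x) ≠ ⊤ := by
    rw [hS]; exact hT.ne
  have hfin := ae_lt_top hmeas hne
  have hint : Integrable (fun x : EuclideanSpace ℝ (Fin d) => (LL d u x * LL d v x).toReal) :=
    integrable_toReal_of_lintegral_ne_top hmeas.aemeasurable hne
  constructor
  · exact (hint.const_mul 4).congr (Filter.Eventually.of_forall fun x => (heq x).symm)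
  · calc ∫ x : EuclideanSpace ℝ (Fin d), btbmK d u x * btbmK d v x
        = ∫ x : EuclideanSpace ℝ (Fin d), 4 * (LL d u x * LL d v x).toReal := by simp_rw [heq]
      _ = 4 * ∫ x : EuclideanSpace ℝ (Fin d), (LL d u x * LL d v x).toReal := integral_const_mul 4 _
      _ = twoBtK d u v := by
          rw [integral_toReal hmeas.aemeasurable hfin, hS, ← twoBtK_eq_toReal hd3 hu hv]


end BTBMaux

theorem btbm_L2_difference_identity (d : ℕ) (hd1 : 1 ≤ d) (hd3 : d ≤ 3)
    (u v : ℝ) (hu : 0 < u) (hv : 0 < v) :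
    ∫ x : EuclideanSpace ℝ (Fin d), (btbmK d u x - btbmK d v x) ^ 2
      = twoBtK d u u + twoBtK d v v - 2 * twoBtK d u v := by
  obtain ⟨huu_i, huu⟩ := BTBMaux.cross hd3 hu hu
  obtain ⟨hvv_i, hvv⟩ := BTBMaux.cross hd3 hv hv
  obtain ⟨huv_i, huv⟩ := BTBMaux.cross hd3 hu hv
  have h1 : ∀ x : EuclideanSpace ℝ (Fin d), (btbmK d u x - btbmK d v x) ^ 2
      = btbmK d u x * btbmK d u x + btbmK d v x * btbmK d v x
        - 2 * (btbmK d u x * btbmK d v x) := by intro x; ring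
  simp_rw [h1]
  have hadd : Integrable (fun x : EuclideanSpace ℝ (Fin d) =>
      btbmK d u x * btbmK d u x + btbmK d v x * btbmK d v x) := huu_i.add hvv_i
  have hmul : Integrable (fun x : EuclideanSpace ℝ (Fin d) =>
      2 * (btbmK d u x * btbmK d v x)) := huv_i.const_mul 2
  rw [integral_sub hadd hmul, integral_add huu_i hvv_i, integral_const_mul, huu, hvv, huv]
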